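/- The Airy function is bounded on ℝ: defining Ai(x) = lim_{R→∞} ∫₀^R cos(t³/3 + x·t) dt, there exists a constant M such that |Ai(x)| ≤ M for all real x. -/

import Mathlib

open Filter intervalIntegral

/-- The Airy function, defined as the improper integral
`Ai(x) = lim_{R→∞} ∫₀^R cos(t³/3 + xt) dt`. -/
noncomputable def Ai (x : ℝ) : ℝ :=
  limUnder atTop (fun R : ℝ => ∫ t in (0:ℝ)..R, Real.cos (t ^ 3 / 3 + x * t))


lemma airy_cont (x : ℝ) : Continuous fun t : ℝ => Real.cos (t ^ 3 / 3 + x * t) := by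
  fun_prop

lemma vdc (x lam a b : ℝ) (ha : 0 ≤ a) (hab : a ≤ b) (hlam : 0 < lam)
    (h : ∀ t ∈ Set.Icc a b, lam ≤ |t ^ 2 + x|) :
    |∫ t in a..b, Real.cos (t ^ 3 / 3 + x * t)| ≤ 4 / lam := by
  have hicc : Set.uIcc a b = Set.Icc a b := Set.uIcc_of_le hab
  have hne : ∀ t ∈ Set.Icc a b, t ^ 2 + x ≠ 0 := by
    intro t ht h0
    have := h t ht
    rw [h0, abs_zero] at this
    linarith
  set u : ℝ → ℝ := fun t => (t ^ 2 + x)⁻¹ with hu_def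
  set u' : ℝ → ℝ := fun t => -(2 * t) / (t ^ 2 + x) ^ 2 with hu'_def
  set v : ℝ → ℝ := fun t => Real.sin (t ^ 3 / 3 + x * t) with hv_def
  set v' : ℝ → ℝ := fun t => Real.cos (t ^ 3 / 3 + x * t) * (t ^ 2 + x) with hv'_def
  have hφ : ∀ t : ℝ, HasDerivAt (fun s => s ^ 3 / 3 + x * s) (t ^ 2 + x) t := by
    intro t
    have h1 : HasDerivAt (fun s : ℝ => s ^ 3 / 3 + x * s)
        ((3 : ℕ) * t ^ 2 / 3 + x * 1) t :=
      ((hasDerivAt_pow 3 t).div_const 3).add ((hasDerivAt_id t).const_mul x)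
    convert h1 using 1
    push_cast; ring
  have hv : ∀ t : ℝ, HasDerivAt v (v' t) t := fun t =>
    (Real.hasDerivAt_sin _).comp t (hφ t)
  have hu : ∀ t ∈ Set.Icc a b, HasDerivAt u (u' t) t := by
    intro t ht
    have hq : HasDerivAt (fun s : ℝ => s ^ 2 + x) (2 * t) t := by
      simpa using (hasDerivAt_pow 2 t).add_const x
    exact hq.inv (hne t ht)
  have hu'cont : ContinuousOn u' (Set.Icc a b) := by
    apply ContinuousOn.div
    · fun_prop
    · fun_prop
    · intro t ht
      exact pow_ne_zero _ (hne t ht)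
  have hu'int : IntervalIntegrable u' MeasureTheory.volume a b := by
    apply ContinuousOn.intervalIntegrable
    rw [hicc]; exact hu'cont
  have hv'int : IntervalIntegrable v' MeasureTheory.volume a b := by
    apply Continuous.intervalIntegrable
    fun_prop
  have heq : (∫ t in a..b, Real.cos (t ^ 3 / 3 + x * t)) = ∫ t in a..b, u t * v' t := by
    apply intervalIntegral.integral_congr
    intro t ht
    rw [hicc] at ht
    have h0 := hne t ht
    simp only [hu_def, hv'_def]
    field_simp
  have hparts := intervalIntegral.integral_mul_deriv_eq_deriv_mul
    (fun t ht => hu t (hicc ▸ ht)) (fun t _ => hv t) hu'int hv'int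
  have hFTC : (∫ t in a..b, u' t) = u b - u a :=
    intervalIntegral.integral_eq_sub_of_hasDerivAt (fun t ht => hu t (hicc ▸ ht)) hu'int
  -- bounds
  have hub : ∀ t ∈ Set.Icc a b, |u t| ≤ lam⁻¹ := by
    intro t ht
    rw [hu_def, abs_inv]
    exact inv_anti₀ hlam (h t ht)
  have hvb : ∀ t : ℝ, |v t| ≤ 1 := fun t =>
    abs_le.mpr ⟨Real.neg_one_le_sin _, Real.sin_le_one _⟩
  have hu'neg : ∀ t ∈ Set.Icc a b, u' t ≤ 0 := by
    intro t ht
    have ht0 : 0 ≤ t := le_trans ha ht.1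
    have : (0:ℝ) ≤ (t ^ 2 + x) ^ 2 := sq_nonneg _
    rw [hu'_def]
    apply div_nonpos_of_nonpos_of_nonneg <;> nlinarith
  have hmono : (∫ t in a..b, |u' t * v t|) ≤ ∫ t in a..b, -u' t := by
    apply intervalIntegral.integral_mono_on hab
    · exact ((hu'int.mul_continuousOn (by fun_prop)).abs)
    · exact hu'int.neg
    · intro t ht
      calc |u' t * v t| = |u' t| * |v t| := abs_mul _ _
        _ ≤ |u' t| * 1 := by
            exact mul_le_mul_of_nonneg_left (hvb t) (abs_nonneg _)
        _ = -u' t := by rw [mul_one, abs_of_nonpos (hu'neg t ht)]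
  have hintabs : |∫ t in a..b, u' t * v t| ≤ 2 / lam := by
    have h1 : |∫ t in a..b, u' t * v t| ≤ ∫ t in a..b, |u' t * v t| := by
      have := intervalIntegral.norm_integral_le_integral_norm
        (f := fun t => u' t * v t) (μ := MeasureTheory.volume) hab
      simpa only [Real.norm_eq_abs] using this
    have h2 : (∫ t in a..b, -u' t) = u a - u b := by
      rw [intervalIntegral.integral_neg, hFTC]; ring
    have h3 : u a - u b ≤ 2 / lam := by
      have := hub a ⟨le_refl a, hab⟩
      have := hub b ⟨hab, le_refl b⟩
      have hl : lam⁻¹ = 1 / lam := (one_div lam).symm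
      cases' abs_le.mp (hub a ⟨le_refl a, hab⟩) with h4 h5
      cases' abs_le.mp (hub b ⟨hab, le_refl b⟩) with h6 h7
      have h28 : (2:ℝ)/lam = 1/lam + 1/lam := by ring
      rw [h28, hl] at *
      linarith
    linarith [h1.trans (hmono.trans_eq h2)]
  rw [heq, hparts]
  have hA : |u b * v b| ≤ 1 / lam := by
    rw [abs_mul]
    calc |u b| * |v b| ≤ lam⁻¹ * 1 :=
          mul_le_mul (hub b ⟨hab, le_refl b⟩) (hvb b) (abs_nonneg _) (by positivity)
      _ = 1 / lam := by rw [mul_one, one_div]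
  have hB : |u a * v a| ≤ 1 / lam := by
    rw [abs_mul]
    calc |u a| * |v a| ≤ lam⁻¹ * 1 :=
          mul_le_mul (hub a ⟨le_refl a, hab⟩) (hvb a) (abs_nonneg _) (by positivity)
      _ = 1 / lam := by rw [mul_one, one_div]
  have := abs_sub (u b * v b - u a * v a) (∫ t in a..b, u' t * v t)
  have h5 : |u b * v b - u a * v a| ≤ |u b * v b| + |u a * v a| := abs_sub _ _
  calc |u b * v b - u a * v a - ∫ t in a..b, u' t * v t|
      ≤ |u b * v b - u a * v a| + |∫ t in a..b, u' t * v t| := abs_sub _ _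
    _ ≤ (1/lam + 1/lam) + 2/lam := by
        apply add_le_add _ hintabs
        exact h5.trans (add_le_add hA hB)
    _ = 4 / lam := by ring

lemma airy_intble (x a b : ℝ) :
    IntervalIntegrable (fun t : ℝ => Real.cos (t ^ 3 / 3 + x * t)) MeasureTheory.volume a b :=
  (airy_cont x).intervalIntegrable a b

lemma triv_bound (x a b : ℝ) (hab : a ≤ b) :
    |∫ t in a..b, Real.cos (t ^ 3 / 3 + x * t)| ≤ b - a := by
  have h := intervalIntegral.norm_integral_le_of_norm_le_const
    (C := 1) (f := fun t : ℝ => Real.cos (t ^ 3 / 3 + x * t)) (a := a) (b := b)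
    (fun t _ => by simpa [Real.norm_eq_abs] using Real.abs_cos_le_one _)
  rw [Real.norm_eq_abs] at h
  have h2 : |b - a| = b - a := abs_of_nonneg (by linarith)
  linarith

lemma bound_all (x R : ℝ) (hR : 0 ≤ R) :
    |∫ t in (0:ℝ)..R, Real.cos (t ^ 3 / 3 + x * t)| ≤ 8 := by
  rcases le_or_gt (-1) x with hx | hx
  · -- x ≥ -1
    rcases le_or_gt R 2 with hR2 | hR2
    · have := triv_bound x 0 R hR
      linarith
    · have hsplit :
          (∫ t in (0:ℝ)..R, Real.cos (t ^ 3 / 3 + x * t)) =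
            (∫ t in (0:ℝ)..2, Real.cos (t ^ 3 / 3 + x * t)) +
              ∫ t in (2:ℝ)..R, Real.cos (t ^ 3 / 3 + x * t) :=
        (intervalIntegral.integral_add_adjacent_intervals (airy_intble x 0 2)
          (airy_intble x 2 R)).symm
      have h1 := triv_bound x 0 2 (by norm_num)
      have h2 : |∫ t in (2:ℝ)..R, Real.cos (t ^ 3 / 3 + x * t)| ≤ 4 / 3 := by
        apply vdc x 3 2 R (by norm_num) (le_of_lt hR2) (by norm_num)
        intro t ht
        have h3 : (3:ℝ) ≤ t ^ 2 + x := by nlinarith [ht.1]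
        exact h3.trans (le_abs_self _)
      rw [hsplit]
      have habs := abs_add_le (∫ t in (0:ℝ)..2, Real.cos (t ^ 3 / 3 + x * t))
        (∫ t in (2:ℝ)..R, Real.cos (t ^ 3 / 3 + x * t))
      linarith
  · -- x < -1
    set s := Real.sqrt (-x) with hs_def
    have hxpos : (0:ℝ) < -x := by linarith
    have hs2 : s ^ 2 = -x := Real.sq_sqrt (le_of_lt hxpos)
    have hs0 : 0 < s := Real.sqrt_pos.mpr hxpos
    have hs1 : 1 < s := by nlinarith
    have hrs1 : 1 ≤ Real.sqrt s := by
      rw [show (1:ℝ) = Real.sqrt 1 by simp]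
      exact Real.sqrt_le_sqrt (by linarith)
    have hrs0 : 0 < Real.sqrt s := by linarith
    set d := (Real.sqrt s)⁻¹ with hd_def
    have hd0 : 0 < d := inv_pos.mpr hrs0
    have hd1 : d ≤ 1 := by
      rw [hd_def]
      exact inv_le_one_of_one_le₀ hrs1
    have hds : d * s = Real.sqrt s := by
      have hss : Real.sqrt s * Real.sqrt s = s := Real.mul_self_sqrt (le_of_lt hs0)
      rw [hd_def]
      field_simp
      rw [sq, hss]
    have hds1 : 1 ≤ d * s := by rw [hds]; exact hrs1
    have hp1 : 0 ≤ s - d := by linarith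
    -- bound on [0, s-d]
    have hleft : ∀ t ∈ Set.Icc (0:ℝ) (s - d), (1:ℝ) ≤ |t ^ 2 + x| := by
      intro t ht
      have ht2 : t ^ 2 ≤ (s - d) ^ 2 := by nlinarith [ht.1, ht.2]
      have key : (1:ℝ) ≤ -(t ^ 2 + x) := by nlinarith
      exact le_abs.mpr (Or.inr key)
    have hv1 : ∀ b : ℝ, 0 ≤ b → b ≤ s - d →
        |∫ t in (0:ℝ)..b, Real.cos (t ^ 3 / 3 + x * t)| ≤ 4 := by
      intro b hb0 hb
      have := vdc x 1 0 b le_rfl hb0 one_pos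
        (fun t ht => hleft t ⟨ht.1, ht.2.trans hb⟩)
      linarith
    rcases le_or_gt R (s - d) with hc1 | hc1
    · have := hv1 R hR hc1; linarith
    · rcases le_or_gt R (s + d) with hc2 | hc2
      · have hsplit :
            (∫ t in (0:ℝ)..R, Real.cos (t ^ 3 / 3 + x * t)) =
              (∫ t in (0:ℝ)..(s - d), Real.cos (t ^ 3 / 3 + x * t)) +
                ∫ t in (s - d)..R, Real.cos (t ^ 3 / 3 + x * t) :=
          (intervalIntegral.integral_add_adjacent_intervals (airy_intble x 0 (s - d))
            (airy_intble x (s - d) R)).symm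
        have h1 := hv1 (s - d) hp1 le_rfl
        have h2 := triv_bound x (s - d) R (le_of_lt hc1)
        rw [hsplit]
        have habs := abs_add_le (∫ t in (0:ℝ)..(s - d), Real.cos (t ^ 3 / 3 + x * t))
          (∫ t in (s - d)..R, Real.cos (t ^ 3 / 3 + x * t))
        linarith
      · have hsplit :
            (∫ t in (0:ℝ)..R, Real.cos (t ^ 3 / 3 + x * t)) =
              ((∫ t in (0:ℝ)..(s - d), Real.cos (t ^ 3 / 3 + x * t)) +
                ∫ t in (s - d)..(s + d), Real.cos (t ^ 3 / 3 + x * t)) +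
                ∫ t in (s + d)..R, Real.cos (t ^ 3 / 3 + x * t) := by
          rw [intervalIntegral.integral_add_adjacent_intervals (airy_intble x 0 (s - d))
            (airy_intble x (s - d) (s + d)),
            intervalIntegral.integral_add_adjacent_intervals (airy_intble x 0 (s + d))
            (airy_intble x (s + d) R)]
        have h1 := hv1 (s - d) hp1 le_rfl
        have h2 := triv_bound x (s - d) (s + d) (by linarith)
        have h3 : |∫ t in (s + d)..R, Real.cos (t ^ 3 / 3 + x * t)| ≤ 2 := by
          have := vdc x 2 (s + d) R (by linarith) (le_of_lt hc2) (by norm_num)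
            (fun t ht => by
              have ht2 : (s + d) ^ 2 ≤ t ^ 2 := by nlinarith [ht.1]
              have key : (2:ℝ) ≤ t ^ 2 + x := by nlinarith
              exact key.trans (le_abs_self _))
          linarith
        rw [hsplit]
        have habs1 := abs_add_le ((∫ t in (0:ℝ)..(s - d), Real.cos (t ^ 3 / 3 + x * t)) +
          ∫ t in (s - d)..(s + d), Real.cos (t ^ 3 / 3 + x * t))
          (∫ t in (s + d)..R, Real.cos (t ^ 3 / 3 + x * t))
        have habs2 := abs_add_le (∫ t in (0:ℝ)..(s - d), Real.cos (t ^ 3 / 3 + x * t))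
          (∫ t in (s - d)..(s + d), Real.cos (t ^ 3 / 3 + x * t))
        linarith

lemma airy_tendsto (x : ℝ) :
    ∃ L, Tendsto (fun R : ℝ => ∫ t in (0:ℝ)..R, Real.cos (t ^ 3 / 3 + x * t)) atTop (nhds L) := by
  apply cauchySeq_tendsto_of_complete
  rw [Metric.cauchySeq_iff]
  intro ε hε
  set N := Real.sqrt (|x| + 8 / ε) + 1 with hN_def
  have h8 : (0:ℝ) < 8 / ε := div_pos (by norm_num) hε
  have hA0 : (0:ℝ) ≤ |x| + 8 / ε := add_nonneg (abs_nonneg x) (le_of_lt h8)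
  have hN0 : 0 < N := by rw [hN_def]; positivity
  clear_value N
  have key : ∀ m n, N ≤ n → n ≤ m →
      dist (∫ t in (0:ℝ)..m, Real.cos (t ^ 3 / 3 + x * t))
        (∫ t in (0:ℝ)..n, Real.cos (t ^ 3 / 3 + x * t)) < ε := by
    intro m n hn hnm
    rw [Real.dist_eq,
      intervalIntegral.integral_interval_sub_left (airy_intble x 0 m) (airy_intble x 0 n)]
    have hlam : (0:ℝ) < 8 / ε := by positivity
    have hbd := vdc x (8 / ε) n m (le_trans (le_of_lt hN0) hn) hnm hlam ?_
    · have : 4 / (8 / ε) = ε / 2 := by field_simp; ring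
      rw [this] at hbd
      linarith
    · intro t ht
      have htN : N ≤ t := hn.trans ht.1
      have h1 : N ^ 2 ≤ t ^ 2 := by nlinarith
      have h2 : |x| + 8 / ε ≤ N ^ 2 := by
        rw [hN_def]
        nlinarith [Real.sq_sqrt hA0, Real.sqrt_nonneg (|x| + 8 / ε)]
      have h3 : 8 / ε ≤ t ^ 2 + x := by
        cases' abs_le.mp (le_refl |x|) with h4 h5
        linarith [neg_abs_le x]
      exact h3.trans (le_abs_self _)
  refine ⟨N, fun m hm n hn => ?_⟩
  rcases le_total n m with h | h
  · exact key m n hn h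
  · rw [dist_comm]; exact key n m hm h

theorem airy_bounded : ∃ M : ℝ, ∀ x : ℝ, |Ai x| ≤ M := by
  refine ⟨8, fun x => ?_⟩
  obtain ⟨L, hL⟩ := airy_tendsto x
  have hAi : Ai x = L := hL.limUnder_eq
  rw [hAi]
  exact le_of_tendsto hL.abs (eventually_atTop.2 ⟨0, fun R hR => bound_all x R hR⟩)
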